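/- Define the value-iteration sequence by V_0(s) = 0 for all s ∈ ℕ and V_{k+1} = T V_k. Then for every k ∈ ℕ the iterate V_k is nondecreasing, i.e., V_k(s1) ≤ V_k(s2) whenever s1 ≤ s2. -/

import Mathlib

noncomputable def Q0 (eps : ℝ) (V : ℕ → ℝ) (s : ℕ) : ℝ :=
  (s : ℝ) + (1 - eps) * V s + eps * V (s + 1)

noncomputable def Q1 (Tu : ℕ) (Cu om p eps : ℝ) (V : ℕ → ℝ) (s : ℕ) : ℝ :=
  (s : ℝ) + ((Tu : ℝ) - 1) / 2 + om * Cu + (1 - eps / (Tu : ℝ)) * V s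
    + (eps / (Tu : ℝ)) * p ^ Tu * V Tu
    + (eps / (Tu : ℝ)) * (1 - p ^ Tu) * V (s + Tu)

noncomputable def Q2 (Tu' Tp : ℕ) (Cu Cp om p eps : ℝ) (V : ℕ → ℝ) (s : ℕ) : ℝ :=
  (s : ℝ) + (((Tp : ℝ) + (Tu' : ℝ)) - 1) / 2
    + om * (((Tp : ℝ) * Cp + (Tu' : ℝ) * Cu) / ((Tp : ℝ) + (Tu' : ℝ)))
    + (1 - eps / ((Tp : ℝ) + (Tu' : ℝ))) * V s
    + (eps / ((Tp : ℝ) + (Tu' : ℝ))) * p ^ Tu' * V (Tp + Tu')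
    + (eps / ((Tp : ℝ) + (Tu' : ℝ))) * (1 - p ^ Tu') * V (s + (Tp + Tu'))

noncomputable def Tbell (Tu Tu' Tp : ℕ) (Cu Cp om p eps : ℝ) (V : ℕ → ℝ) (s : ℕ) : ℝ :=
  min (Q0 eps V s) (min (Q1 Tu Cu om p eps V s) (Q2 Tu' Tp Cu Cp om p eps V s))

theorem stmt1 (Tu Tu' Tp : ℕ) (hTu : 0 < Tu) (hTu' : 0 < Tu') (hTp : 0 < Tp)
    (Cu Cp om p eps : ℝ) (hCu : 0 ≤ Cu) (hCp : 0 ≤ Cp) (hom : 0 ≤ om)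
    (hp0 : 0 < p) (hp1 : p ≤ 1) (heps0 : 0 < eps) (heps1 : eps ≤ 1) :
    ∀ k : ℕ, ∀ s1 s2 : ℕ, s1 ≤ s2 →
      (Tbell Tu Tu' Tp Cu Cp om p eps)^[k] (fun _ => (0 : ℝ)) s1 ≤
      (Tbell Tu Tu' Tp Cu Cp om p eps)^[k] (fun _ => (0 : ℝ)) s2 := by
  have hTuR : (1:ℝ) ≤ (Tu:ℝ) := by exact_mod_cast hTu
  have hTTR : (1:ℝ) ≤ (Tp:ℝ) + (Tu':ℝ) := by
    have : (1:ℝ) ≤ (Tp:ℝ) := by exact_mod_cast hTp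
    have h2 : (0:ℝ) ≤ (Tu':ℝ) := by positivity
    linarith
  have hpTu : p ^ Tu ≤ 1 := pow_le_one₀ hp0.le hp1
  have hpTu' : p ^ Tu' ≤ 1 := pow_le_one₀ hp0.le hp1
  have h1 : eps / (Tu:ℝ) ≤ 1 := by
    rw [div_le_one (by linarith)]; linarith
  have h2 : eps / ((Tp:ℝ) + (Tu':ℝ)) ≤ 1 := by
    rw [div_le_one (by linarith)]; linarith
  have hd1 : (0:ℝ) ≤ eps / (Tu:ℝ) := by positivity
  have hd2 : (0:ℝ) ≤ eps / ((Tp:ℝ) + (Tu':ℝ)) := by positivity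
  intro k
  induction k with
  | zero => intro s1 s2 _; simp
  | succ k ih =>
    intro s1 s2 hs
    rw [Function.iterate_succ_apply']
    set V := (Tbell Tu Tu' Tp Cu Cp om p eps)^[k] (fun _ => (0 : ℝ)) with hV
    have hsR : (s1:ℝ) ≤ (s2:ℝ) := by exact_mod_cast hs
    unfold Tbell
    refine min_le_min ?_ (min_le_min ?_ ?_)
    · unfold Q0
      gcongr
      · exact ih _ _ hs
      · exact ih _ _ (by omega)
    · unfold Q1
      gcongr
      · exact ih _ _ hs
      · exact ih _ _ (by omega)
    · unfold Q2
      gcongr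
      · exact ih _ _ hs
      · exact ih _ _ (by omega)
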